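/- The anti-plurality solution R^AP satisfies bottom-aligned consistency (BCON) but satisfies neither concatenation consistency (CCON) nor top-aligned consistency (TCON). -/

import Mathlib

namespace SocRank

/-- A coalitional ranking (a weak order on a set of feasible nonempty coalitions),
represented by its list of equivalence classes, listed from best to worst. -/
structure CoalRanking (X : Type*) where
  classes : List (Finset (Finset X))
  class_nonempty : ∀ C ∈ classes, C.Nonempty
  coal_nonempty : ∀ C ∈ classes, ∀ S ∈ C, S.Nonempty
  classes_disjoint : classes.Pairwise Disjoint

namespace CoalRanking

variable {X : Type*}

/-- The coalition domain `𝒟(≿)` of a coalitional ranking. -/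
def domain [DecidableEq X] (r : CoalRanking X) : Finset (Finset X) :=
  r.classes.foldr (· ∪ ·) ∅

/-- The list of equivalence classes of the restriction of a ranking to a set `D`
of coalitions. -/
def restrictClasses [DecidableEq X] (r : CoalRanking X) (D : Finset (Finset X)) :
    List (Finset (Finset X)) :=
  (r.classes.map (· ∩ D)).filter (fun C => decide C.Nonempty)

/-- Merging two lists of equivalence classes by aligning them at the top. -/
def zipUnion [DecidableEq X] :
    List (Finset (Finset X)) → List (Finset (Finset X)) → List (Finset (Finset X))
  | [], M => M
  | L, [] => L
  | A :: L, B :: M => (A ∪ B) :: zipUnion L M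

/-- `r` is a sum of the disjoint rankings `r₁` and `r₂`: its domain is the union of
the two domains and its restriction to the domain of `rᵢ` is `rᵢ`. -/
def IsSum [DecidableEq X] (r r₁ r₂ : CoalRanking X) : Prop :=
  Disjoint r₁.domain r₂.domain ∧
  r.domain = r₁.domain ∪ r₂.domain ∧
  r.restrictClasses r₁.domain = r₁.classes ∧
  r.restrictClasses r₂.domain = r₂.classes

/-- `r` is the concatenation sum `r₁ · r₂` of the disjoint rankings `r₁` and `r₂`. -/
def IsConcatSum [DecidableEq X] (r r₁ r₂ : CoalRanking X) : Prop :=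
  Disjoint r₁.domain r₂.domain ∧ r.classes = r₁.classes ++ r₂.classes

/-- `r` is the top-aligned sum `r₁ ⊨ r₂` of the disjoint rankings `r₁` and `r₂`. -/
def IsTopAlignedSum [DecidableEq X] (r r₁ r₂ : CoalRanking X) : Prop :=
  Disjoint r₁.domain r₂.domain ∧ r.classes = zipUnion r₁.classes r₂.classes

/-- `r` is the bottom-aligned sum `r₁ ⫤ r₂` of the disjoint rankings `r₁` and `r₂`. -/
def IsBottomAlignedSum [DecidableEq X] (r r₁ r₂ : CoalRanking X) : Prop :=
  Disjoint r₁.domain r₂.domain ∧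
  r.classes = (zipUnion r₁.classes.reverse r₂.classes.reverse).reverse

/-- Renaming the individuals of a coalitional ranking by a permutation `σ` of `X`:
the ranking `≿^σ`. -/
def mapPerm [DecidableEq X] (σ : Equiv.Perm X) (r : CoalRanking X) : CoalRanking X where
  classes := r.classes.map (fun C => C.image (fun S => S.image σ))
  class_nonempty := by
    intro C hC
    simp only [List.mem_map] at hC
    obtain ⟨C₀, hC₀, rfl⟩ := hC
    exact (r.class_nonempty C₀ hC₀).image _
  coal_nonempty := by
    intro C hC S hS
    simp only [List.mem_map] at hC
    obtain ⟨C₀, hC₀, rfl⟩ := hC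
    simp only [Finset.mem_image] at hS
    obtain ⟨S₀, hS₀, rfl⟩ := hS
    exact (r.coal_nonempty C₀ hC₀ S₀ hS₀).image _
  classes_disjoint := by
    refine List.Pairwise.map _ (fun {A B} h => ?_) r.classes_disjoint
    exact (Finset.disjoint_image
      (Finset.image_injective σ.injective)).mpr h

/-- Renaming the coalitions of a coalitional ranking by a permutation `π` of the set of
coalitions (mapping nonempty sets to nonempty sets): the ranking `≿_π`. -/
def mapCoalPerm [DecidableEq X] (π : Equiv.Perm (Finset X))
    (hπ : ∀ S : Finset X, S.Nonempty → (π S).Nonempty) (r : CoalRanking X) :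
    CoalRanking X where
  classes := r.classes.map (fun C => C.image π)
  class_nonempty := by
    intro C hC
    simp only [List.mem_map] at hC
    obtain ⟨C₀, hC₀, rfl⟩ := hC
    exact (r.class_nonempty C₀ hC₀).image _
  coal_nonempty := by
    intro C hC S hS
    simp only [List.mem_map] at hC
    obtain ⟨C₀, hC₀, rfl⟩ := hC
    simp only [Finset.mem_image] at hS
    obtain ⟨S₀, hS₀, rfl⟩ := hS
    exact hπ S₀ (r.coal_nonempty C₀ hC₀ S₀ hS₀)
  classes_disjoint := by
    refine List.Pairwise.map _ (fun {A B} h => ?_) r.classes_disjoint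
    exact (Finset.disjoint_image π.injective).mpr h

end CoalRanking

open CoalRanking

variable {X : Type*}

/-- A social ranking solution: a map assigning to every coalitional ranking a binary
relation on the individuals. -/
abbrev SRSMap (X : Type*) := CoalRanking X → X → X → Prop

/-- The symmetric part `I` of the social ranking. -/
def Ind (R : SRSMap X) (r : CoalRanking X) (x y : X) : Prop := R r x y ∧ R r y x

/-- The asymmetric part `P` of the social ranking. -/
def Pref (R : SRSMap X) (r : CoalRanking X) (x y : X) : Prop := R r x y ∧ ¬ R r y x

/-- Conditions (1)-(4) of consistency for the triple `(r₁, r₂, r)`. -/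
def ConsistentAt (R : SRSMap X) (r₁ r₂ r : CoalRanking X) : Prop :=
  ∀ x y : X,
    (Ind R r₁ x y → Ind R r₂ x y → Ind R r x y) ∧
    (Ind R r₁ x y → Pref R r₂ x y → Pref R r x y) ∧
    (Pref R r₁ x y → Ind R r₂ x y → Pref R r x y) ∧
    (Pref R r₁ x y → Pref R r₂ x y → Pref R r x y)

/-- Consistency (CON). -/
def CON [DecidableEq X] (R : SRSMap X) : Prop :=
  ∀ r₁ r₂ r : CoalRanking X, IsSum r r₁ r₂ → ConsistentAt R r₁ r₂ r

/-- Concatenation consistency (CCON). -/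
def CCON [DecidableEq X] (R : SRSMap X) : Prop :=
  ∀ r₁ r₂ r : CoalRanking X, IsConcatSum r r₁ r₂ → ConsistentAt R r₁ r₂ r

/-- Top-aligned consistency (TCON). -/
def TCON [DecidableEq X] (R : SRSMap X) : Prop :=
  ∀ r₁ r₂ r : CoalRanking X, IsTopAlignedSum r r₁ r₂ → ConsistentAt R r₁ r₂ r

/-- Bottom-aligned consistency (BCON). -/
def BCON [DecidableEq X] (R : SRSMap X) : Prop :=
  ∀ r₁ r₂ r : CoalRanking X, IsBottomAlignedSum r r₁ r₂ → ConsistentAt R r₁ r₂ r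

/-- II-concatenation consistency. -/
def IICCON [DecidableEq X] (R : SRSMap X) : Prop :=
  ∀ r₁ r₂ r : CoalRanking X, IsConcatSum r r₁ r₂ →
    ∀ x y : X, Ind R r₁ x y → Ind R r₂ x y → Ind R r x y

/-- IP-concatenation consistency. -/
def IPCCON [DecidableEq X] (R : SRSMap X) : Prop :=
  ∀ r₁ r₂ r : CoalRanking X, IsConcatSum r r₁ r₂ →
    ∀ x y : X, Ind R r₁ x y → Pref R r₂ x y → Pref R r x y

/-- PI-concatenation consistency. -/
def PICCON [DecidableEq X] (R : SRSMap X) : Prop :=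
  ∀ r₁ r₂ r : CoalRanking X, IsConcatSum r r₁ r₂ →
    ∀ x y : X, Pref R r₁ x y → Ind R r₂ x y → Pref R r x y

/-- PP-concatenation consistency. -/
def PPCCON [DecidableEq X] (R : SRSMap X) : Prop :=
  ∀ r₁ r₂ r : CoalRanking X, IsConcatSum r r₁ r₂ →
    ∀ x y : X, Pref R r₁ x y → Pref R r₂ x y → Pref R r x y

/-- `x_k`: the number of coalitions of the class `C` containing `x`. -/
def cnt [DecidableEq X] (x : X) (C : Finset (Finset X)) : ℕ :=
  (C.filter (fun S => x ∈ S)).card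

/-- The vector `θ_≿(x) = (x₁, …, x_l)`. -/
def theta [DecidableEq X] (r : CoalRanking X) (x : X) : List ℕ :=
  r.classes.map (cnt x)

/-- `sign`: `1` on positive numbers, `0` otherwise. -/
def sgn (n : ℕ) : ℕ := if 0 < n then 1 else 0

/-- The vector `θ̇_≿(x) = (sign(x₁), …, sign(x_l))`. -/
def thetaDot [DecidableEq X] (r : CoalRanking X) (x : X) : List ℕ :=
  (theta r x).map sgn

/-- The lexicographic order `≥^L` on vectors (of equal length). -/
def lexGE : List ℕ → List ℕ → Prop
  | _, [] => True
  | [], _ :: _ => False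
  | a :: as, b :: bs => b < a ∨ (a = b ∧ lexGE as bs)

/-- The lexicographic excellence solution (lex-cel) `R^L`. -/
def lexcel [DecidableEq X] : SRSMap X := fun r x y => lexGE (theta r x) (theta r y)

/-- The sign lexicographic excellence solution (S lex-cel) `R^{SL}`. -/
def slexcel [DecidableEq X] : SRSMap X := fun r x y => lexGE (thetaDot r x) (thetaDot r y)

/-- The plurality solution `R^P`. -/
def plurality [DecidableEq X] : SRSMap X := fun r x y =>
  (theta r y).headD 0 ≤ (theta r x).headD 0

/-- The sign plurality solution `R^{SP}`. -/
def splurality [DecidableEq X] : SRSMap X := fun r x y =>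
  sgn ((theta r y).headD 0) ≤ sgn ((theta r x).headD 0)

/-- The anti-plurality solution `R^{AP}`. -/
def antiplurality [DecidableEq X] : SRSMap X := fun r x y =>
  (theta r x).getLastD 0 ≤ (theta r y).getLastD 0

/-- `e_≿(x)`: the largest `k` such that `x` belongs to every coalition of each of the
first `k` equivalence classes. -/
def eIIS [DecidableEq X] (r : CoalRanking X) (x : X) : ℕ :=
  (r.classes.takeWhile (fun C => decide (∀ S ∈ C, x ∈ S))).length

/-- The intersection initial segment solution (IIS) `R^{IIS}`. -/
def iis [DecidableEq X] : SRSMap X := fun r x y => eIIS r y ≤ eIIS r x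

/-- The index of the equivalence class a coalition belongs to. -/
def classIdx [DecidableEq X] (r : CoalRanking X) (S : Finset X) : ℕ :=
  r.classes.findIdx (fun C => decide (S ∈ C))

/-- `C_{xy}`: the number of CP comparisons in favour of `x` against `y`. -/
def cpCount [DecidableEq X] [Fintype X] (r : CoalRanking X) (x y : X) : ℕ :=
  ((Finset.univ : Finset (Finset X)).filter (fun S =>
    S.Nonempty ∧ x ∉ S ∧ y ∉ S ∧ insert x S ∈ r.domain ∧ insert y S ∈ r.domain ∧
    classIdx r (insert x S) < classIdx r (insert y S))).card

/-- The Ceteris Paribus majority solution `R^{CPM}`. -/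
def cpm [DecidableEq X] [Fintype X] : SRSMap X := fun r x y =>
  cpCount r y x ≤ cpCount r x y

/-- Neutrality (NT). -/
def NT [DecidableEq X] (R : SRSMap X) : Prop :=
  ∀ (σ : Equiv.Perm X) (r : CoalRanking X) (x y : X),
    R (r.mapPerm σ) (σ x) (σ y) ↔ R r x y

/-- Weak coalitional anonymity (WCA). -/
def WCA [DecidableEq X] (R : SRSMap X) : Prop :=
  ∀ (x y : X) (π : Equiv.Perm (Finset X))
    (hπ : ∀ S : Finset X, S.Nonempty → (π S).Nonempty),
    (∀ S : Finset X, x ∈ S → x ∈ π S) → (∀ S : Finset X, y ∈ S → y ∈ π S) →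
    ∀ r : CoalRanking X,
      (R (r.mapCoalPerm π hπ) x y ↔ R r x y) ∧ (R (r.mapCoalPerm π hπ) y x ↔ R r y x)

/-- The weak union very important person property (WUVIP). -/
def WUVIP (R : SRSMap X) : Prop :=
  ∀ (r : CoalRanking X) (A B : Finset (Finset X)), r.classes = [A, B] →
    ∀ x y : X, (∃ S ∈ A, x ∈ S) → (∀ S ∈ A, y ∉ S) → Pref R r x y

/-- All indifference all winners (AIAW). -/
def AIAW [DecidableEq X] (R : SRSMap X) : Prop :=
  ∀ r : CoalRanking X, r.classes.length ≤ 1 →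
    (∀ x y : X, (∃ S ∈ r.domain, x ∈ S) → (∃ S ∈ r.domain, y ∈ S) → Ind R r x y) ∧
    (∀ x z : X, (∃ S ∈ r.domain, x ∈ S) → (∀ S ∈ r.domain, z ∉ S) → Pref R r x z)

/-- Independence of the decomposition of the worst sets (IDWS). -/
def IDWS [DecidableEq X] (R : SRSMap X) : Prop :=
  ∀ (r r' : CoalRanking X) (L G : List (Finset (Finset X))) (W : Finset (Finset X)),
    L ≠ [] → r.classes = L ++ [W] → r'.classes = L ++ G →
    G.foldr (· ∪ ·) ∅ = W →
    ∀ x y : X, Pref R r x y → Pref R r' x y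

/-- Independence of the addition of the worst sets (IAWS). -/
def IAWS [DecidableEq X] (R : SRSMap X) : Prop :=
  ∀ (r r' : CoalRanking X) (G : Finset (Finset X)),
    r'.classes = r.classes ++ [G] → (∀ S ∈ G, S ∉ r.domain) →
    ∀ x y : X, Pref R r x y → Pref R r' x y

/-- Tops-only (TO). -/
def TO (R : SRSMap X) : Prop :=
  ∀ (r r' : CoalRanking X) (A : Finset (Finset X)),
    r.classes.head? = some A → r'.classes.head? = some A → R r = R r'

/-- The dual S lex-cel `R^{DSL}`. -/
def dslexcel [DecidableEq X] : SRSMap X := fun r x y =>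
  lexGE ((thetaDot r y).reverse) ((thetaDot r x).reverse)

/-- The inverse dual S lex-cel `R^{IDSL}`. -/
def idslexcel [DecidableEq X] : SRSMap X := fun r x y => dslexcel r y x

/-- The vector `θ̃_≿(x)` used by the S lex-cel with precedence on unanimity. -/
def tildeTheta [DecidableEq X] (r : CoalRanking X) (x : X) : List ℕ :=
  r.classes.map (fun C => if cnt x C = C.card then 2 else if 0 < cnt x C then 1 else 0)

/-- The S lex-cel with a particular precedence on unanimity `R^{SLUN}`. -/
def slun [DecidableEq X] : SRSMap X := fun r x y =>
  lexGE (tildeTheta r x) (tildeTheta r y)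

/-- The S sum score `Σ_k sign(x_k)`. -/
def ssum [DecidableEq X] (r : CoalRanking X) (x : X) : ℕ := (thetaDot r x).sum

/-- The S sum rule with tie-breaking by S lex-cel `R^{SSUM,SL}`. -/
def ssumSL [DecidableEq X] : SRSMap X := fun r x y =>
  ssum r y < ssum r x ∨ (ssum r x = ssum r y ∧ slexcel r x y)

end SocRank

open SocRank

namespace SocRank

section Aux

variable {X : Type*} [DecidableEq X]

lemma cnt_union (x : X) {A B : Finset (Finset X)} (h : Disjoint A B) :
    cnt x (A ∪ B) = cnt x A + cnt x B := by
  unfold cnt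
  rw [Finset.filter_union,
    Finset.card_union_of_disjoint (h.mono (Finset.filter_subset _ _) (Finset.filter_subset _ _))]

lemma subset_foldr {C : Finset (Finset X)} :
    ∀ {l : List (Finset (Finset X))}, C ∈ l → C ⊆ l.foldr (· ∪ ·) ∅
  | [], h => absurd h List.not_mem_nil
  | _ :: l, h => by
    rcases List.mem_cons.1 h with rfl | h
    · exact Finset.subset_union_left
    · exact (subset_foldr h).trans Finset.subset_union_right

/-- The last equivalence class (or `∅`). -/
def lastCl (l : List (Finset (Finset X))) : Finset (Finset X) := l.getLastD ∅

lemma getLastD_map_cnt (x : X) : ∀ l : List (Finset (Finset X)),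
    (l.map (cnt x)).getLastD 0 = cnt x (lastCl l)
  | [] => by simp [cnt, lastCl]
  | [_] => by simp [lastCl]
  | a :: b :: l => by
    have h := getLastD_map_cnt x (b :: l)
    simp only [List.map_cons, List.getLastD_cons, lastCl] at h ⊢
    exact h

lemma lastCnt_eq (r : CoalRanking X) (x : X) :
    (theta r x).getLastD 0 = cnt x (lastCl r.classes) := getLastD_map_cnt x _

lemma lastCl_reverse (l : List (Finset (Finset X))) : lastCl l.reverse = l.headD ∅ := by
  cases l with
  | nil => rfl
  | cons a t => simp [lastCl, List.reverse_cons, List.getLastD_concat]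

lemma headD_reverse (l : List (Finset (Finset X))) : l.reverse.headD ∅ = lastCl l := by
  rw [← lastCl_reverse l.reverse, List.reverse_reverse]

lemma headD_zipUnion : ∀ L M : List (Finset (Finset X)),
    (CoalRanking.zipUnion L M).headD ∅ = L.headD ∅ ∪ M.headD ∅
  | [], M => by simp [CoalRanking.zipUnion]
  | _ :: _, [] => by simp [CoalRanking.zipUnion]
  | _ :: _, _ :: _ => by simp [CoalRanking.zipUnion]

lemma lastCl_mem : ∀ l : List (Finset (Finset X)), lastCl l ∈ l ∨ lastCl l = ∅
  | [] => Or.inr rfl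
  | [a] => Or.inl (by simp [lastCl])
  | a :: b :: t => by
    have h : lastCl (a :: b :: t) = lastCl (b :: t) := by
      simp [lastCl, List.getLastD_cons]
    rw [h]
    rcases lastCl_mem (b :: t) with h' | h'
    · exact Or.inl (List.mem_cons_of_mem _ h')
    · exact Or.inr h' 

lemma lastCnt_bottom {r r₁ r₂ : CoalRanking X} (h : CoalRanking.IsBottomAlignedSum r r₁ r₂)
    (x : X) :
    (theta r x).getLastD 0 = (theta r₁ x).getLastD 0 + (theta r₂ x).getLastD 0 := by
  obtain ⟨hd, hc⟩ := h
  have hA : lastCl r.classes = lastCl r₁.classes ∪ lastCl r₂.classes := by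
    rw [hc, lastCl_reverse, headD_zipUnion, headD_reverse, headD_reverse]
  have hdisj : Disjoint (lastCl r₁.classes) (lastCl r₂.classes) := by
    rcases lastCl_mem r₁.classes with h1 | h1
    · rcases lastCl_mem r₂.classes with h2 | h2
      · exact hd.mono (subset_foldr h1) (subset_foldr h2)
      · rw [h2]; exact Finset.disjoint_empty_right _
    · rw [h1]; exact Finset.disjoint_empty_left _
  rw [lastCnt_eq, lastCnt_eq, lastCnt_eq, hA, cnt_union x hdisj]

end Aux

end SocRank


/-- anti-plurality satisfies BCON but satisfies neither CCON nor TCON. -/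
theorem antiplurality_bcon_not_ccon_not_tcon {X : Type*} [DecidableEq X] [Fintype X]
    (hX : 3 ≤ Fintype.card X) :
    BCON (antiplurality : SRSMap X) ∧ ¬ CCON (antiplurality : SRSMap X) ∧
      ¬ TCON (antiplurality : SRSMap X) := by
  obtain ⟨x, y, z, -, -, -, hxy, hxz, hyz⟩ := Finset.two_lt_card_iff.mp
    (by rw [Finset.card_univ]; omega : 2 < (Finset.univ : Finset X).card)
  have hne1 : ({y} : Finset X) ≠ {x, y} := by
    intro h
    have : x ∈ ({y} : Finset X) := by rw [h]; exact Finset.mem_insert_self x {y}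
    exact hxy (Finset.mem_singleton.mp this)
  have hne2 : ({y, z} : Finset X) ≠ {y} := by
    intro h
    have : z ∈ ({y} : Finset X) := by rw [← h]; exact Finset.mem_insert_of_mem (Finset.mem_singleton_self z)
    exact hyz.symm (Finset.mem_singleton.mp this)
  have hne3 : ({y, z} : Finset X) ≠ {x, y} := by
    intro h
    have : z ∈ ({x, y} : Finset X) := by
      rw [← h]; exact Finset.mem_insert_of_mem (Finset.mem_singleton_self z)
    rcases Finset.mem_insert.mp this with h' | h'
    · exact hxz.symm h'
    · exact hyz.symm (Finset.mem_singleton.mp h')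
  refine ⟨?_, ?_, ?_⟩
  · -- BCON
    intro r₁ r₂ r hs x' y'
    have hx := lastCnt_bottom hs x'
    have hy := lastCnt_bottom hs y'
    simp only [Ind, Pref, antiplurality]
    omega
  · -- ¬ CCON
    intro hC
    set r₁c : CoalRanking X := ⟨[{({y} : Finset X)}], by simp, by
      intro C hC S hS
      simp only [List.mem_singleton] at hC
      subst hC
      simp only [Finset.mem_singleton] at hS
      subst hS
      exact Finset.singleton_nonempty y, by simp⟩ with hr1
    set r₂c : CoalRanking X := ⟨[{({x, y} : Finset X)}], by simp, by
      intro C hC S hS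
      simp only [List.mem_singleton] at hC
      subst hC
      simp only [Finset.mem_singleton] at hS
      subst hS
      exact ⟨x, Finset.mem_insert_self x {y}⟩, by simp⟩ with hr2
    set rc : CoalRanking X := ⟨[{({y} : Finset X)}, {({x, y} : Finset X)}], by simp, by
      intro C hC S hS
      simp only [List.mem_cons, List.mem_singleton, List.not_mem_nil, or_false] at hC
      rcases hC with rfl | rfl
      · simp only [Finset.mem_singleton] at hS
        subst hS
        exact Finset.singleton_nonempty y
      · simp only [Finset.mem_singleton] at hS
        subst hS
        exact ⟨x, Finset.mem_insert_self x {y}⟩, by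
      simp [Finset.disjoint_singleton, hne1]⟩ with hrc
    have hdisj : Disjoint r₁c.domain r₂c.domain := by
      simp [CoalRanking.domain, hr1, hr2, Finset.disjoint_singleton, hne1, hxy]
    have h := (hC r₁c r₂c rc ⟨hdisj, rfl⟩ x y).2.2.1
    have hP1 : Pref antiplurality r₁c x y := by
      constructor <;>
        simp [antiplurality, theta, cnt, hr1, Finset.filter_singleton, hxy]
    have hI2 : Ind antiplurality r₂c x y := by
      constructor <;>
        simp [antiplurality, theta, cnt, hr2, Finset.filter_singleton]
    have := (h hP1 hI2).2
    apply this
    simp [antiplurality, theta, cnt, hrc, Finset.filter_singleton]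
  · -- ¬ TCON
    intro hT
    set r₁t : CoalRanking X := ⟨[{({y} : Finset X)}, {({x, y} : Finset X)}], by simp, by
      intro C hC S hS
      simp only [List.mem_cons, List.mem_singleton, List.not_mem_nil, or_false] at hC
      rcases hC with rfl | rfl
      · simp only [Finset.mem_singleton] at hS
        subst hS
        exact Finset.singleton_nonempty y
      · simp only [Finset.mem_singleton] at hS
        subst hS
        exact ⟨x, Finset.mem_insert_self x {y}⟩, by
      simp [Finset.disjoint_singleton, hne1]⟩ with hr1
    set r₂t : CoalRanking X := ⟨[{({y, z} : Finset X)}], by simp, by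
      intro C hC S hS
      simp only [List.mem_singleton] at hC
      subst hC
      simp only [Finset.mem_singleton] at hS
      subst hS
      exact ⟨y, Finset.mem_insert_self y {z}⟩, by simp⟩ with hr2
    set rt : CoalRanking X := ⟨[{({y} : Finset X)} ∪ {({y, z} : Finset X)},
        {({x, y} : Finset X)}], by
      intro C hC
      simp only [List.mem_cons, List.mem_singleton, List.not_mem_nil, or_false] at hC
      rcases hC with rfl | rfl
      · exact ⟨{y}, by simp⟩
      · exact Finset.singleton_nonempty _, by
      intro C hC S hS
      simp only [List.mem_cons, List.mem_singleton, List.not_mem_nil, or_false] at hC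
      rcases hC with rfl | rfl
      · simp only [Finset.mem_union, Finset.mem_singleton] at hS
        rcases hS with rfl | rfl
        · exact Finset.singleton_nonempty y
        · exact ⟨y, Finset.mem_insert_self y {z}⟩
      · simp only [Finset.mem_singleton] at hS
        subst hS
        exact ⟨x, Finset.mem_insert_self x {y}⟩, by
      simp [Finset.disjoint_singleton, hne1, hne2, hne3, hxy, hxz, hyz]⟩ with hrt
    have hdisj : Disjoint r₁t.domain r₂t.domain := by
      simp [CoalRanking.domain, hr1, hr2, Finset.disjoint_singleton, hne2, hne3]
    have hzip : rt.classes = CoalRanking.zipUnion r₁t.classes r₂t.classes := rfl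
    have h := (hT r₁t r₂t rt ⟨hdisj, hzip⟩ x y).2.1
    have hI1 : Ind antiplurality r₁t x y := by
      constructor <;>
        simp [antiplurality, theta, cnt, hr1, Finset.filter_singleton]
    have hP2 : Pref antiplurality r₂t x y := by
      constructor <;>
        simp [antiplurality, theta, cnt, hr2, Finset.filter_singleton, hxy, hxz]
    have := (h hI1 hP2).2
    apply this
    simp [antiplurality, theta, cnt, hrt, Finset.filter_singleton]
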